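/- For every monotone map φ : [n] → [1], the map f_φ commutes with the differentials and the augmentation, hence is an endomorphism of the augmented chain complex C(m+1+n). -/

import Mathlib

/-!
We represent the (augmented) normalized chain complex `C(N)` of the standard `N`-simplex by the
free abelian group on the finite subsets of `{0,…,N}`, a subset of cardinality `p+1` standing for
the strictly increasing `(p+1)`-tuple of its elements (a `p`-chain); the differential is the
alternating sum of the tuples obtained by deleting one entry (and vanishes on `0`-chains), and
the augmentation sends every `0`-chain basis element to `1` (and vanishes in higher degrees).
-/

noncomputable section

abbrev Ch (α : Type) := Finset α →₀ ℤ

/-- index of `a` in `s`: the number of smaller elements of `s`. -/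
def idx {α : Type} [LinearOrder α] (s : Finset α) (a : α) : ℕ :=
  (s.filter (fun b => b < a)).card

/-- value of the simplicial differential on a basis tuple:
`d(i₀,…,i_p) = Σₖ (−1)^k (i₀,…,î_k,…,i_p)` for `p ≥ 1`, and `0` on `0`-chains. -/
def dAux {α : Type} [LinearOrder α] (s : Finset α) : Ch α :=
  if 2 ≤ s.card then
    ∑ a ∈ s, ((-1 : ℤ) ^ (idx s a)) • Finsupp.single (s.erase a) (1 : ℤ)
  else 0

/-- the differential of `C(N)`. -/
def chD (α : Type) [LinearOrder α] : Ch α →ₗ[ℤ] Ch α :=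
  Finsupp.lift _ ℤ _ dAux

/-- the augmentation of `C(N)`: `e(i₀) = 1` on `0`-chains, `0` in higher degrees. -/
def chE (α : Type) : Ch α →ₗ[ℤ] ℤ :=
  Finsupp.lift _ ℤ _ (fun s => if s.card = 1 then (1 : ℤ) else 0)

/-- The chain map `c(ψ) : C(N') → C(N)` induced by a (monotone) map `ψ`,
`(i₀,…,i_p) ↦ (ψ(i₀),…,ψ(i_p))`, with the convention that a tuple with a repeated entry
denotes `0`. -/
def chMap {α β : Type} [DecidableEq β] (ψ : α → β) : Ch α →ₗ[ℤ] Ch β :=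
  Finsupp.lift _ ℤ _ (fun s =>
    if (s.image ψ).card = s.card then Finsupp.single (s.image ψ) (1 : ℤ) else 0)

/-- the element `m` of `{0,…,m+1+n}`. -/
def elM (m n : ℕ) : Fin (m+1+n+1) := ⟨m, by omega⟩

/-- `f_n` on a basis tuple `(i₀ < … < i_p)`, following the case analysis of the paper
(expressed via the sets of entries `< m` and `> m`):
`f_n = id` if `i_p ≤ m` or `m ≤ i₀`; `f_n(i₀,i₁) = (i₀,m) + (m,i₁)` if `p = 1` and
`i₀ < m < i₁`; `f_n(i₀,…,i_p) = (m,i₁,…,i_p)` if `p > 1` and `i₀ < m < i₁`;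
`f_n(i₀,…,i_p) = (i₀,…,i_{p−1},m)` if `p > 1` and `i_{p−1} < m < i_p`; `f_n = 0` otherwise
(i.e. if `i₁ ≤ m ≤ i_{p−1}`). -/
def fnAux (m n : ℕ) (s : Finset (Fin (m+1+n+1))) : Ch (Fin (m+1+n+1)) :=
  let M := elM m n
  let lo := s.filter (fun i => i < M)
  let hi := s.filter (fun i => M < i)
  if lo.card = 0 ∨ hi.card = 0 then Finsupp.single s 1
  else if lo.card = 1 ∧ hi.card = 1 ∧ M ∉ s then
    Finsupp.single (insert M lo) 1 + Finsupp.single (insert M hi) 1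
  else if lo.card = 1 ∧ 2 ≤ hi.card ∧ M ∉ s then Finsupp.single (insert M hi) 1
  else if 2 ≤ lo.card ∧ hi.card = 1 ∧ M ∉ s then Finsupp.single (insert M lo) 1
  else 0

/-- the graded `ℤ`-linear endomorphism `f_n` of `C(m+1+n)`. -/
def fN (m n : ℕ) : Ch (Fin (m+1+n+1)) →ₗ[ℤ] Ch (Fin (m+1+n+1)) :=
  Finsupp.lift _ ℤ _ (fnAux m n)

/-- `φ̄ : [m+1+n] → [1]`, extending `φ : [n] → [1]` by `0` on `{0,…,m}`. -/
def phibar (m n : ℕ) (φ : Fin (n+1) → Fin 2) : Fin (m+1+n+1) → Fin 2 := fun i =>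
  if (i : ℕ) ≤ m then 0 else φ ⟨(i : ℕ) - (m + 1), by have := i.isLt; omega⟩

/-- concatenation on the right with the fixed tuple `t`, extended `ℤ`-bilinearly, with the
repeated-entry convention (a concatenation which is not strictly increasing is `0`). -/
def concatR {α : Type} [LinearOrder α] (t : Finset α) : Ch α →ₗ[ℤ] Ch α :=
  Finsupp.lift _ ℤ _ (fun u =>
    if ∀ x ∈ u, ∀ y ∈ t, x < y then Finsupp.single (u ∪ t) (1 : ℤ) else 0)

/-- `f_φ` on a basis tuple `s`: writing `s` as the concatenation of its prefix
`s₀ = (i₀,…,i_{k_φ})` on which `φ̄` vanishes and its suffix `s₁ = (i_{k_φ+1},…,i_p)` on which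
`φ̄` equals `1`, set `f_φ(s) = f_n(s₀)·s₁` (in particular `f_φ(s) = s` when `k_φ = −1` and
`f_φ(s) = f_n(s)` when `k_φ = p`). -/
def fPhiAux (m n : ℕ) (φ : Fin (n+1) → Fin 2) (s : Finset (Fin (m+1+n+1))) :
    Ch (Fin (m+1+n+1)) :=
  concatR (s.filter (fun i => phibar m n φ i = 1))
    (fnAux m n (s.filter (fun i => phibar m n φ i = 0)))

/-- the graded `ℤ`-linear endomorphism `f_φ` of `C(m+1+n)`. -/
def fPhi (m n : ℕ) (φ : Fin (n+1) → Fin 2) :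
    Ch (Fin (m+1+n+1)) →ₗ[ℤ] Ch (Fin (m+1+n+1)) :=
  Finsupp.lift _ ℤ _ (fPhiAux m n φ)

section Part1
open Finsupp

variable {α β : Type}

/-- the `DecidableEq` derived from a linear order. -/
abbrev dEqD (α : Type) [LinearOrder α] : DecidableEq α := fun a b => LinearOrder.toDecidableEq a b

/-- value of `chMap ψ` on a basis element. -/
def cmA [DecidableEq β] (ψ : α → β) (s : Finset α) : Ch β :=
  if (s.image ψ).card = s.card then Finsupp.single (s.image ψ) (1 : ℤ) else 0

lemma lift_single {M : Type} [AddCommMonoid M] [Module ℤ M] (f : Finset α → M) (s : Finset α) :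
    Finsupp.lift M ℤ (Finset α) f (Finsupp.single s 1) = f s := by
  simp [Finsupp.lift_apply, Finsupp.sum_single_index]

lemma chMap_single [DecidableEq β] (ψ : α → β) (s : Finset α) :
    chMap ψ (Finsupp.single s 1) = cmA ψ s := lift_single _ _

lemma chD_single [LinearOrder α] (s : Finset α) :
    chD α (Finsupp.single s 1) = dAux s := lift_single _ _

lemma chE_single (s : Finset α) :
    chE α (Finsupp.single s 1) = if s.card = 1 then (1:ℤ) else 0 := lift_single _ _

lemma concatR_single [LinearOrder α] (t u : Finset α) :
    concatR t (Finsupp.single u 1) =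
      if ∀ x ∈ u, ∀ y ∈ t, x < y then Finsupp.single (u ∪ t) (1 : ℤ) else 0 := lift_single _ _

lemma fPhi_single (m n : ℕ) (φ : Fin (n+1) → Fin 2) (s : Finset (Fin (m+1+n+1))) :
    fPhi m n φ (Finsupp.single s 1) = fPhiAux m n φ s := lift_single _ _

lemma chLhom_ext {M : Type} [AddCommMonoid M] [Module ℤ M] {f g : Ch α →ₗ[ℤ] M}
    (h : ∀ s : Finset α, f (Finsupp.single s 1) = g (Finsupp.single s 1)) : f = g := by
  apply Finsupp.lhom_ext
  intro a b
  have hb : (Finsupp.single a b : Ch α) = b • Finsupp.single a 1 := by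
    rw [Finsupp.smul_single, smul_eq_mul, mul_one]
  rw [hb, map_smul, map_smul, h]

end Part1
section Part2
set_option linter.unusedSectionVars false
variable {α β : Type} [LinearOrder α] [LinearOrder β] {ψ : α → β}

lemma lt_iff_of_injOn (hψ : Monotone ψ) {s : Finset α} (hinj : Set.InjOn ψ s)
    {x a : α} (hx : x ∈ s) (ha : a ∈ s) : ψ x < ψ a ↔ x < a := by
  constructor
  · intro h
    by_contra hc
    push_neg at hc
    exact absurd (hψ hc) (not_le.mpr h)
  · intro h
    rcases lt_or_eq_of_le (hψ h.le) with h' | h'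
    · exact h'
    · exact absurd (hinj hx ha h') (ne_of_lt h)

lemma image_erase_of_injOn {s : Finset α} (hinj : Set.InjOn ψ s) {a : α} (ha : a ∈ s) :
    (s.erase a).image ψ = (s.image ψ).erase (ψ a) := by
  ext y
  simp only [Finset.mem_image, Finset.mem_erase]
  constructor
  · rintro ⟨x, ⟨hxa, hxs⟩, rfl⟩
    exact ⟨fun h => hxa (hinj hxs ha h), ⟨x, hxs, rfl⟩⟩
  · rintro ⟨hy, x, hxs, rfl⟩
    exact ⟨x, ⟨fun h => hy (by rw [h]), hxs⟩, rfl⟩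

lemma idx_image (hψ : Monotone ψ) {s : Finset α} (hinj : Set.InjOn ψ s) {a : α} (ha : a ∈ s) :
    idx (s.image ψ) (ψ a) = idx s a := by
  unfold idx
  have himg : (s.image ψ).filter (fun b => b < ψ a) = (s.filter (fun b => b < a)).image ψ := by
    ext y
    simp only [Finset.mem_filter, Finset.mem_image]
    constructor
    · rintro ⟨⟨x, hxs, rfl⟩, hlt⟩
      exact ⟨x, ⟨hxs, (lt_iff_of_injOn hψ hinj hxs ha).mp hlt⟩, rfl⟩
    · rintro ⟨x, ⟨hxs, hlt⟩, rfl⟩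
      exact ⟨⟨x, hxs, rfl⟩, (lt_iff_of_injOn hψ hinj hxs ha).mpr hlt⟩
  rw [himg, Finset.card_image_of_injOn
    (hinj.mono (Finset.coe_subset.mpr (Finset.filter_subset _ s)))]

lemma idx_adj {s : Finset α} {a b : α} (ha : a ∈ s) (hab : a < b)
    (hbetween : ∀ c ∈ s, a < c → c < b → False) : idx s b = idx s a + 1 := by
  have hsplit : s.filter (fun x => x < b) = insert a (s.filter (fun x => x < a)) := by
    ext x
    simp only [Finset.mem_filter, Finset.mem_insert]
    constructor
    · rintro ⟨hxs, hxb⟩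
      rcases lt_trichotomy x a with h | h | h
      · exact Or.inr ⟨hxs, h⟩
      · exact Or.inl h
      · exact absurd (hbetween x hxs h hxb) not_false
    · rintro (rfl | ⟨hxs, hxa⟩)
      · exact ⟨ha, hab⟩
      · exact ⟨hxs, hxa.trans hab⟩
  rw [idx, idx, hsplit, Finset.card_insert_of_notMem (by simp)]

lemma sum_cancel_of_not_injOn (hψ : Monotone ψ) {s : Finset α} (hninj : ¬ Set.InjOn ψ s) :
    ∑ a ∈ s, ((-1:ℤ) ^ (idx s a)) • cmA ψ (s.erase a) = (0 : Ch β) := by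
  classical
  obtain ⟨x, hx, y, hy, hψxy, hxy⟩ : ∃ x ∈ s, ∃ y ∈ s, ψ x = ψ y ∧ x ≠ y := by
    rw [Set.InjOn] at hninj
    push_neg at hninj
    obtain ⟨x, hx, y, hy, h1, h2⟩ := hninj
    exact ⟨x, hx, y, hy, h1, h2⟩
  set T : α → Finset α := fun a => (s.erase a).filter (fun b => ψ b = ψ a) with hT
  have hTmem : ∀ a b, b ∈ T a ↔ b ∈ s ∧ b ≠ a ∧ ψ b = ψ a := by
    intro a b
    simp only [hT, Finset.mem_filter, Finset.mem_erase]
    tauto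
  have key1 : ∀ a, Set.InjOn ψ (s.erase a) → (T a).Nonempty := by
    intro a hi
    have hxya : x = a ∨ y = a := by
      by_contra hc
      push_neg at hc
      exact hxy (hi (Finset.mem_coe.mpr (Finset.mem_erase.mpr ⟨hc.1, hx⟩))
        (Finset.mem_coe.mpr (Finset.mem_erase.mpr ⟨hc.2, hy⟩)) hψxy)
    rcases hxya with rfl | rfl
    · exact ⟨y, (hTmem x y).mpr ⟨hy, fun h => hxy h.symm, hψxy.symm⟩⟩
    · exact ⟨x, (hTmem y x).mpr ⟨hx, hxy, hψxy⟩⟩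
  have key2 : ∀ a, Set.InjOn ψ (s.erase a) → ∀ b ∈ T a, ∀ c ∈ T a, b = c := by
    intro a hi b hb c hc
    rw [hTmem] at hb hc
    exact hi (Finset.mem_coe.mpr (Finset.mem_erase.mpr ⟨hb.2.1, hb.1⟩))
      (Finset.mem_coe.mpr (Finset.mem_erase.mpr ⟨hc.2.1, hc.1⟩)) (hb.2.2.trans hc.2.2.symm)
  set g : α → α := fun a => if h : Set.InjOn ψ (s.erase a) then (T a).min' (key1 a h) else a
    with hg
  have hF0 : ∀ a, ¬ Set.InjOn ψ (s.erase a) →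
      ((-1:ℤ) ^ (idx s a)) • cmA ψ (s.erase a) = (0 : Ch β) := by
    intro a h
    rw [cmA, if_neg (fun hc => h (Finset.card_image_iff.mp hc)), smul_zero]
  have hFval : ∀ a ∈ s, ∀ b, b ∈ T a → Set.InjOn ψ (s.erase a) →
      ((-1:ℤ) ^ (idx s a)) • cmA ψ (s.erase a)
        = ((-1:ℤ) ^ (idx s a)) • Finsupp.single (s.image ψ) (1:ℤ) := by
    intro a ha b hb hi
    rw [hTmem] at hb
    have himg : (s.erase a).image ψ = s.image ψ := by
      apply subset_antisymm
      · exact Finset.image_subset_image (Finset.erase_subset _ _)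
      · intro z hz
        obtain ⟨w, hw, rfl⟩ := Finset.mem_image.mp hz
        by_cases hwa : w = a
        · exact Finset.mem_image.mpr ⟨b, Finset.mem_erase.mpr ⟨hb.2.1, hb.1⟩,
            by rw [hb.2.2, hwa]⟩
        · exact Finset.mem_image.mpr ⟨w, Finset.mem_erase.mpr ⟨hwa, hw⟩, rfl⟩
    rw [cmA, if_pos (Finset.card_image_iff.mpr hi), himg]
  -- the partner's erased set is also injective
  have keyInj : ∀ a b, b ∈ s → b ≠ a → ψ b = ψ a →
      (∀ c ∈ s, c ≠ a → ψ c = ψ a → c = b) → Set.InjOn ψ (s.erase a) →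
      Set.InjOn ψ (s.erase b) := by
    intro a b hbs hba hψba huniq hi
    intro u hu v hv hψuv
    rw [Finset.coe_erase, Set.mem_diff] at hu hv
    rw [Set.mem_singleton_iff] at hu hv
    by_contra huv
    by_cases hua : u = a
    · subst hua
      have : v = b := huniq v (Finset.mem_coe.mp hv.1) (fun h => huv h.symm) hψuv.symm
      exact hv.2 this
    · by_cases hva : v = a
      · subst hva
        have : u = b := huniq u (Finset.mem_coe.mp hu.1) huv hψuv
        exact hu.2 this
      · exact huv (hi (Finset.mem_coe.mpr (Finset.mem_erase.mpr ⟨hua, Finset.mem_coe.mp hu.1⟩))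
          (Finset.mem_coe.mpr (Finset.mem_erase.mpr ⟨hva, Finset.mem_coe.mp hv.1⟩)) hψuv)
  -- sign cancellation
  have keySign : ∀ a ∈ s, ∀ b, b ∈ s → b ≠ a → ψ b = ψ a →
      (∀ c ∈ s, c ≠ a → ψ c = ψ a → c = b) →
      ((-1:ℤ) ^ (idx s a)) + ((-1:ℤ) ^ (idx s b)) = 0 := by
    intro a ha b hbs hba hψba huniq
    rcases lt_or_gt_of_ne (Ne.symm hba) with h | h
    · -- a < b
      have hadj : idx s b = idx s a + 1 := by
        apply idx_adj ha h
        intro c hc hac hcb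
        have hψc : ψ c = ψ a := le_antisymm (by rw [← hψba]; exact hψ hcb.le) (hψ hac.le)
        exact absurd (huniq c hc (ne_of_gt hac) hψc) (ne_of_lt hcb)
      rw [hadj, pow_succ]
      ring
    · -- b < a
      have hadj : idx s a = idx s b + 1 := by
        apply idx_adj hbs h
        intro c hc hbc hca
        have hψc : ψ c = ψ a := le_antisymm (hψ hca.le) (by rw [← hψba]; exact hψ hbc.le)
        exact absurd (huniq c hc (ne_of_lt hca) hψc) (ne_of_gt hbc)
      rw [hadj, pow_succ]
      ring
  apply Finset.sum_involution (fun a _ => g a)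
  · -- cancellation
    intro a ha
    by_cases hi : Set.InjOn ψ (s.erase a)
    · have hga : g a = (T a).min' (key1 a hi) := dif_pos hi
      obtain ⟨hbs, hba, hψb⟩ := (hTmem a _).mp ((T a).min'_mem (key1 a hi))
      have huniq : ∀ c ∈ s, c ≠ a → ψ c = ψ a → c = (T a).min' (key1 a hi) := fun c hc hca hψc =>
        key2 a hi c ((hTmem a c).mpr ⟨hc, hca, hψc⟩) _ ((T a).min'_mem _)
      have hib : Set.InjOn ψ (s.erase ((T a).min' (key1 a hi))) :=
        keyInj a _ hbs hba hψb huniq hi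
      rw [hga, hFval a ha _ ((T a).min'_mem (key1 a hi)) hi,
        hFval _ hbs a ((hTmem _ a).mpr ⟨ha, fun h => hba h.symm, hψb.symm⟩) hib,
        ← add_smul, keySign a ha _ hbs hba hψb huniq, zero_smul]
    · have hga : g a = a := dif_neg hi
      rw [hga, hF0 a hi, add_zero]
  · -- g a ≠ a when term nonzero
    intro a ha hFa
    have hi : Set.InjOn ψ (s.erase a) := by
      by_contra h
      exact hFa (hF0 a h)
    have hga : g a = (T a).min' (key1 a hi) := dif_pos hi
    rw [hga]
    exact ((hTmem a _).mp ((T a).min'_mem (key1 a hi))).2.1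
  · -- g a ∈ s
    intro a ha
    by_cases hi : Set.InjOn ψ (s.erase a)
    · have hga : g a = (T a).min' (key1 a hi) := dif_pos hi
      rw [hga]
      exact ((hTmem a _).mp ((T a).min'_mem (key1 a hi))).1
    · have hga : g a = a := dif_neg hi
      rw [hga]
      exact ha
  · -- involution
    intro a ha
    by_cases hi : Set.InjOn ψ (s.erase a)
    · have hga : g a = (T a).min' (key1 a hi) := dif_pos hi
      obtain ⟨hbs, hba, hψb⟩ := (hTmem a _).mp ((T a).min'_mem (key1 a hi))
      have huniq : ∀ c ∈ s, c ≠ a → ψ c = ψ a → c = (T a).min' (key1 a hi) := fun c hc hca hψc =>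
        key2 a hi c ((hTmem a c).mpr ⟨hc, hca, hψc⟩) _ ((T a).min'_mem _)
      have hib : Set.InjOn ψ (s.erase ((T a).min' (key1 a hi))) :=
        keyInj a _ hbs hba hψb huniq hi
      show g (g a) = a
      have hgb : g ((T a).min' (key1 a hi)) = (T _).min' (key1 _ hib) := dif_pos hib
      rw [hga, hgb]
      -- min' of T b equals a
      have hmem := (hTmem _ _).mp ((T _).min'_mem (key1 _ hib))
      by_contra hne
      have : (T ((T a).min' (key1 a hi))).min' (key1 _ hib) = (T a).min' (key1 a hi) :=
        huniq _ hmem.1 (fun h => hne h) (by rw [hmem.2.2, hψb])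
      exact hmem.2.1 this
    · have hga : g a = a := dif_neg hi
      show g (g a) = a
      rw [hga, hga]

end Part2
section Part2b
set_option linter.unusedSectionVars false
variable {α β : Type} [LinearOrder α] [LinearOrder β] {ψ : α → β}

lemma chMap_d_single (hψ : Monotone ψ) (s : Finset α) :
    chD β (cmA ψ s) = chMap ψ (dAux s) := by
  by_cases hinj : (s.image ψ).card = s.card
  · rw [cmA, if_pos hinj, chD_single]
    have hInj : Set.InjOn ψ s := Finset.card_image_iff.mp hinj
    by_cases h2 : 2 ≤ s.card
    · rw [dAux, if_pos (by rw [hinj]; exact h2), dAux, if_pos h2, map_sum]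
      rw [Finset.sum_image (fun x hx y hy h => hInj hx hy h)]
      apply Finset.sum_congr rfl
      intro a ha
      rw [map_smul, chMap_single, idx_image hψ hInj ha]
      congr 1
      have hsub : Set.InjOn ψ (s.erase a) :=
        hInj.mono (Finset.coe_subset.mpr (Finset.erase_subset _ _))
      have hc2 : ((s.image ψ).erase (ψ a)).card = (s.erase a).card := by
        rw [Finset.card_erase_of_mem (Finset.mem_image_of_mem ψ ha),
          Finset.card_erase_of_mem ha, hinj]
      simp [cmA, image_erase_of_injOn hInj ha, hc2]
    · rw [dAux, if_neg (by rw [hinj]; exact h2), dAux, if_neg h2, map_zero]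
  · rw [cmA, if_neg hinj, map_zero]
    have hninj : ¬ Set.InjOn ψ s := fun h => hinj (Finset.card_image_iff.mpr h)
    have h2 : 2 ≤ s.card := by
      by_contra h
      push_neg at h
      have hss : (↑s : Set α).Subsingleton := by
        intro u hu v hv
        exact Finset.card_le_one.mp (by omega) u (Finset.mem_coe.mp hu) v (Finset.mem_coe.mp hv)
      exact hninj (hss.injOn ψ)
    rw [dAux, if_pos h2, map_sum]
    simp only [map_smul, chMap_single]
    exact (sum_cancel_of_not_injOn hψ hninj).symm

lemma chMap_comp_d (hψ : Monotone ψ) :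
    (chD β).comp (chMap ψ) = (chMap ψ).comp (chD α) := by
  apply chLhom_ext
  intro s
  rw [LinearMap.comp_apply, LinearMap.comp_apply, chMap_single, chD_single]
  exact chMap_d_single hψ s

lemma chE_comp_chMap {γ : Type} (ψ' : γ → β) :
    (chE β).comp (chMap ψ') = chE γ := by
  apply chLhom_ext
  intro s
  rw [LinearMap.comp_apply, chMap_single, chE_single]
  by_cases hinj : (s.image ψ').card = s.card
  · rw [cmA, if_pos hinj, chE_single, hinj]
  · rw [cmA, if_neg hinj, map_zero]
    have h1 : s.card ≠ 1 := by
      intro h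
      obtain ⟨a, rfl⟩ := Finset.card_eq_one.mp h
      simp at hinj
    rw [if_neg h1]

end Part2b
section Part3
set_option linter.unusedSectionVars false
variable {α : Type} [LinearOrder α] [DecidableEq α]

lemma card_partition (M : α) (s : Finset α) :
    s.card = (s.filter (fun i => i < M)).card + (s.filter (fun i => M < i)).card
      + (if M ∈ s then 1 else 0) := by
  classical
  have h1 : s.filter (fun i => ¬ i < M)
      = s.filter (fun i => M < i) ∪ s.filter (fun i => i = M) := by
    ext i
    simp only [Finset.mem_filter, Finset.mem_union, not_lt]
    constructor
    · rintro ⟨hi, hMi⟩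
      rcases lt_or_eq_of_le hMi with h | h
      · exact Or.inl ⟨hi, h⟩
      · exact Or.inr ⟨hi, h.symm⟩
    · rintro (⟨hi, h⟩ | ⟨hi, h⟩)
      · exact ⟨hi, h.le⟩
      · exact ⟨hi, h ▸ le_rfl⟩
  have h2 : Disjoint (s.filter (fun i => M < i)) (s.filter (fun i => i = M)) := by
    rw [Finset.disjoint_left]
    rintro i hi1 hi2
    rw [Finset.mem_filter] at hi1 hi2
    exact absurd (hi2.2 ▸ hi1.2) (lt_irrefl M)
  have h3 : (s.filter (fun i => i = M)).card = if M ∈ s then 1 else 0 := by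
    rw [Finset.filter_eq']
    split_ifs <;> simp
  rw [← Finset.card_filter_add_card_filter_not (p := fun i => i < M), h1,
    Finset.card_union_of_disjoint h2, h3, add_assoc]

lemma image_min_of_high {M : α} {s : Finset α}
    (h : M ∈ s ∨ (s.filter (fun i => M < i)).Nonempty) :
    s.image (fun i => min i M) = insert M (s.filter (fun i => i < M)) := by
  ext x
  simp only [Finset.mem_image, Finset.mem_insert, Finset.mem_filter]
  constructor
  · rintro ⟨i, hi, rfl⟩
    rcases lt_trichotomy i M with hlt | rfl | hgt
    · rw [min_eq_left hlt.le]
      exact Or.inr ⟨hi, hlt⟩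
    · exact Or.inl (min_self i)
    · exact Or.inl (min_eq_right hgt.le)
  · rintro (rfl | ⟨hi, hlt⟩)
    · rcases h with h | ⟨j, hj⟩
      · exact ⟨x, h, min_self x⟩
      · exact ⟨j, (Finset.mem_filter.mp hj).1, min_eq_right (Finset.mem_filter.mp hj).2.le⟩
    · exact ⟨x, hi, min_eq_left hlt.le⟩

lemma image_max_of_low {M : α} {s : Finset α}
    (h : M ∈ s ∨ (s.filter (fun i => i < M)).Nonempty) :
    s.image (fun i => max i M) = insert M (s.filter (fun i => M < i)) := by
  ext x
  simp only [Finset.mem_image, Finset.mem_insert, Finset.mem_filter]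
  constructor
  · rintro ⟨i, hi, rfl⟩
    rcases lt_trichotomy i M with hlt | rfl | hgt
    · exact Or.inl (max_eq_right hlt.le)
    · exact Or.inl (max_self i)
    · rw [max_eq_left hgt.le]
      exact Or.inr ⟨hi, hgt⟩
  · rintro (rfl | ⟨hi, hlt⟩)
    · rcases h with h | ⟨j, hj⟩
      · exact ⟨x, h, max_self x⟩
      · exact ⟨j, (Finset.mem_filter.mp hj).1, max_eq_right (Finset.mem_filter.mp hj).2.le⟩
    · exact ⟨x, hi, max_eq_left hlt.le⟩

lemma cmA_min (M : α) (s : Finset α) :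
    cmA (fun i => min i M) s =
      if (s.filter (fun i => M < i)).card = 0 ∧ M ∉ s then Finsupp.single s 1
      else if (s.filter (fun i => M < i)).card + (if M ∈ s then 1 else 0) = 1
        then Finsupp.single (insert M (s.filter (fun i => i < M))) 1 else 0 := by
  classical
  by_cases hc : (s.filter (fun i => M < i)).card = 0 ∧ M ∉ s
  · rw [if_pos hc]
    have hall : ∀ i ∈ s, min i M = i := by
      intro i hi
      rcases lt_trichotomy i M with h | h | h
      · exact min_eq_left h.le
      · exact absurd (h ▸ hi) hc.2
      · exact absurd ((Finset.mem_filter.mpr ⟨hi, h⟩ : i ∈ s.filter (fun j => M < j)))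
          (by rw [Finset.card_eq_zero.mp hc.1]; exact Finset.notMem_empty i)
    have himg : s.image (fun i => min i M) = s := by
      rw [Finset.image_congr hall, Finset.image_id']
    rw [cmA, himg, if_pos rfl]
  · rw [if_neg hc]
    push_neg at hc
    have h' : M ∈ s ∨ (s.filter (fun i => M < i)).Nonempty := by
      by_cases hM : M ∈ s
      · exact Or.inl hM
      · exact Or.inr (Finset.card_ne_zero.mp (fun h0 => hM (hc h0)))
    have himg := image_min_of_high h'
    have hMnL : M ∉ s.filter (fun i => i < M) := by
      simp [Finset.mem_filter]
    have hcard : (s.image (fun i => min i M)).card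
        = (s.filter (fun i => i < M)).card + 1 := by
      rw [himg, Finset.card_insert_of_notMem hMnL]
    have hpart := card_partition M s
    rw [cmA, hcard]
    by_cases hone : (s.filter (fun i => M < i)).card + (if M ∈ s then 1 else 0) = 1
    · rw [if_pos hone, if_pos (by omega), himg]
    · rw [if_neg hone, if_neg (by omega)]

lemma cmA_max (M : α) (s : Finset α) :
    cmA (fun i => max i M) s =
      if (s.filter (fun i => i < M)).card = 0 ∧ M ∉ s then Finsupp.single s 1
      else if (s.filter (fun i => i < M)).card + (if M ∈ s then 1 else 0) = 1
        then Finsupp.single (insert M (s.filter (fun i => M < i))) 1 else 0 := by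
  classical
  by_cases hc : (s.filter (fun i => i < M)).card = 0 ∧ M ∉ s
  · rw [if_pos hc]
    have hall : ∀ i ∈ s, max i M = i := by
      intro i hi
      rcases lt_trichotomy i M with h | h | h
      · exact absurd ((Finset.mem_filter.mpr ⟨hi, h⟩ : i ∈ s.filter (fun j => j < M)))
          (by rw [Finset.card_eq_zero.mp hc.1]; exact Finset.notMem_empty i)
      · exact absurd (h ▸ hi) hc.2
      · exact max_eq_left h.le
    have himg : s.image (fun i => max i M) = s := by
      rw [Finset.image_congr hall, Finset.image_id']
    rw [cmA, himg, if_pos rfl]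
  · rw [if_neg hc]
    push_neg at hc
    have h' : M ∈ s ∨ (s.filter (fun i => i < M)).Nonempty := by
      by_cases hM : M ∈ s
      · exact Or.inl hM
      · exact Or.inr (Finset.card_ne_zero.mp (fun h0 => hM (hc h0)))
    have himg := image_max_of_low h'
    have hMnH : M ∉ s.filter (fun i => M < i) := by
      simp [Finset.mem_filter]
    have hcard : (s.image (fun i => max i M)).card
        = (s.filter (fun i => M < i)).card + 1 := by
      rw [himg, Finset.card_insert_of_notMem hMnH]
    have hpart := card_partition M s
    rw [cmA, hcard]
    by_cases hone : (s.filter (fun i => i < M)).card + (if M ∈ s then 1 else 0) = 1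
    · rw [if_pos hone, if_pos (by omega), himg]
    · rw [if_neg hone, if_neg (by omega)]

lemma cmA_const (M : α) (s : Finset α) :
    cmA (fun _ => M) s =
      if s.card = 0 then Finsupp.single (∅ : Finset α) 1
      else if s.card = 1 then Finsupp.single ({M} : Finset α) 1 else 0 := by
  classical
  rcases Finset.eq_empty_or_nonempty s with rfl | hne
  · simp [cmA]
  · have himg : s.image (fun _ => M) = {M} := Finset.image_const hne M
    have h0 : s.card ≠ 0 := Finset.card_ne_zero.mpr hne
    rw [cmA, himg, Finset.card_singleton, if_neg h0]
    by_cases h1 : s.card = 1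
    · rw [if_pos h1, if_pos h1.symm]
    · rw [if_neg h1, if_neg (fun h => h1 h.symm)]

end Part3
section Part4
set_option linter.unreachableTactic false
set_option linter.unusedTactic false
set_option linter.unusedSectionVars false
variable {α : Type} [LinearOrder α] [DecidableEq α]

lemma insert_high_eq {M : α} {s : Finset α} (hM : M ∈ s)
    (hL : s.filter (fun i => i < M) = ∅) :
    insert M (s.filter (fun i => M < i)) = s := by
  ext i
  simp only [Finset.mem_insert, Finset.mem_filter]
  constructor
  · rintro (rfl | ⟨hi, _⟩)
    · exact hM
    · exact hi
  · intro hi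
    rcases lt_trichotomy i M with h | h | h
    · exact absurd ((Finset.mem_filter.mpr ⟨hi, h⟩ : i ∈ s.filter (fun j => j < M)))
        (by rw [hL]; exact Finset.notMem_empty i)
    · exact Or.inl h
    · exact Or.inr ⟨hi, h⟩

lemma insert_low_eq {M : α} {s : Finset α} (hM : M ∈ s)
    (hH : s.filter (fun i => M < i) = ∅) :
    insert M (s.filter (fun i => i < M)) = s := by
  ext i
  simp only [Finset.mem_insert, Finset.mem_filter]
  constructor
  · rintro (rfl | ⟨hi, _⟩)
    · exact hM
    · exact hi
  · intro hi
    rcases lt_trichotomy i M with h | h | h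
    · exact Or.inr ⟨hi, h⟩
    · exact Or.inl h
    · exact absurd ((Finset.mem_filter.mpr ⟨hi, h⟩ : i ∈ s.filter (fun j => M < j)))
        (by rw [hH]; exact Finset.notMem_empty i)

lemma fn_decomp (m n : ℕ) (s : Finset (Fin (m+1+n+1))) :
    fnAux m n s = cmA (fun i => min i (elM m n)) s
      + cmA (fun i => max i (elM m n)) s
      - cmA (fun _ => elM m n) s := by
  classical
  have hfn : fnAux m n s =
      (if (s.filter (fun i => i < elM m n)).card = 0
          ∨ (s.filter (fun i => elM m n < i)).card = 0 then Finsupp.single s (1:ℤ)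
      else if (s.filter (fun i => i < elM m n)).card = 1
          ∧ (s.filter (fun i => elM m n < i)).card = 1 ∧ elM m n ∉ s then
        Finsupp.single (insert (elM m n) (s.filter (fun i => i < elM m n))) 1
          + Finsupp.single (insert (elM m n) (s.filter (fun i => elM m n < i))) 1
      else if (s.filter (fun i => i < elM m n)).card = 1
          ∧ 2 ≤ (s.filter (fun i => elM m n < i)).card ∧ elM m n ∉ s then
        Finsupp.single (insert (elM m n) (s.filter (fun i => elM m n < i))) 1
      else if 2 ≤ (s.filter (fun i => i < elM m n)).card
          ∧ (s.filter (fun i => elM m n < i)).card = 1 ∧ elM m n ∉ s then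
        Finsupp.single (insert (elM m n) (s.filter (fun i => i < elM m n))) 1
      else 0) := rfl
  set M := elM m n with hMdef
  set L := s.filter (fun i => i < M) with hLdef
  set H := s.filter (fun i => M < i) with hHdef
  have hpart := card_partition M s
  rw [← hLdef, ← hHdef] at hpart
  rw [hfn, cmA_min M s, cmA_max M s, cmA_const M s, ← hLdef, ← hHdef]
  by_cases hM : M ∈ s
  · simp only [hM, not_true_eq_false, and_false, if_false, if_true] at hpart ⊢
    by_cases hL0 : L.card = 0
    · have hLe : L = ∅ := Finset.card_eq_zero.mp hL0
      by_cases hH0 : H.card = 0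
      · have hHe : H = ∅ := Finset.card_eq_zero.mp hH0
        have hs : s = {M} := by
          have h1 : s.card = 1 := by omega
          obtain ⟨a, ha⟩ := Finset.card_eq_one.mp h1
          rw [ha] at hM
          rw [ha, Finset.mem_singleton.mp hM]
        rw [if_pos (Or.inl hL0), if_pos (show H.card + 1 = 1 by omega),
          if_pos (show L.card + 1 = 1 by omega), if_neg (show ¬ s.card = 0 by omega),
          if_pos (show s.card = 1 by omega), hLe, hHe, hs]
        simp only [insert_empty_eq]
        first | rfl | abel | simp
      · rw [if_pos (Or.inl hL0), if_neg (show ¬ H.card + 1 = 1 by omega),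
          if_pos (show L.card + 1 = 1 by omega), if_neg (show ¬ s.card = 0 by omega),
          if_neg (show ¬ s.card = 1 by omega), insert_high_eq hM hLe]
        first | rfl | abel | simp
    · by_cases hH0 : H.card = 0
      · have hHe : H = ∅ := Finset.card_eq_zero.mp hH0
        rw [if_pos (Or.inr hH0), if_pos (show H.card + 1 = 1 by omega),
          if_neg (show ¬ L.card + 1 = 1 by omega), if_neg (show ¬ s.card = 0 by omega),
          if_neg (show ¬ s.card = 1 by omega), insert_low_eq hM hHe]
        first | rfl | abel | simp
      · rw [if_neg (show ¬ (L.card = 0 ∨ H.card = 0) by omega),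
          if_neg (show ¬ H.card + 1 = 1 by omega), if_neg (show ¬ L.card + 1 = 1 by omega),
          if_neg (show ¬ s.card = 0 by omega), if_neg (show ¬ s.card = 1 by omega)]
        first | rfl | abel | simp
  · simp only [hM, not_false_eq_true, and_true, if_false, if_true, add_zero] at hpart ⊢
    by_cases hL0 : L.card = 0
    · have hLe : L = ∅ := Finset.card_eq_zero.mp hL0
      by_cases hH0 : H.card = 0
      · have hs : s = ∅ := Finset.card_eq_zero.mp (by omega)
        rw [if_pos (Or.inl hL0), if_pos hH0, if_pos hL0, if_pos (show s.card = 0 by omega), hs]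
        first | rfl | abel | simp
      · by_cases hH1 : H.card = 1
        · rw [if_pos (Or.inl hL0), if_neg (show ¬ H.card = 0 by omega), if_pos hH1,
            if_pos hL0, if_neg (show ¬ s.card = 0 by omega),
            if_pos (show s.card = 1 by omega), hLe]
          simp only [insert_empty_eq]
          first | rfl | abel | simp
        · rw [if_pos (Or.inl hL0), if_neg (show ¬ H.card = 0 by omega),
            if_neg (show ¬ H.card = 1 by omega), if_pos hL0,
            if_neg (show ¬ s.card = 0 by omega), if_neg (show ¬ s.card = 1 by omega)]
          first | rfl | abel | simp
    · by_cases hH0 : H.card = 0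
      · have hHe : H = ∅ := Finset.card_eq_zero.mp hH0
        by_cases hL1 : L.card = 1
        · rw [if_pos (Or.inr hH0), if_pos hH0, if_neg (show ¬ L.card = 0 by omega),
            if_pos hL1, if_neg (show ¬ s.card = 0 by omega),
            if_pos (show s.card = 1 by omega), hHe]
          simp only [insert_empty_eq]
          first | rfl | abel | simp
        · rw [if_pos (Or.inr hH0), if_pos hH0, if_neg (show ¬ L.card = 0 by omega),
            if_neg (show ¬ L.card = 1 by omega), if_neg (show ¬ s.card = 0 by omega),
            if_neg (show ¬ s.card = 1 by omega)]
          first | rfl | abel | simp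
      · rw [if_neg (show ¬ (L.card = 0 ∨ H.card = 0) by omega),
          if_neg (show ¬ H.card = 0 by omega), if_neg (show ¬ L.card = 0 by omega),
          if_neg (show ¬ s.card = 0 by omega), if_neg (show ¬ s.card = 1 by omega)]
        by_cases hL1 : L.card = 1
        · by_cases hH1 : H.card = 1
          · rw [if_pos (show L.card = 1 ∧ H.card = 1 from ⟨hL1, hH1⟩), if_pos hH1, if_pos hL1]
            first | rfl | abel | simp
          · rw [if_neg (show ¬ (L.card = 1 ∧ H.card = 1) by omega),
              if_pos (show L.card = 1 ∧ 2 ≤ H.card from ⟨hL1, by omega⟩),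
              if_neg (show ¬ H.card = 1 by omega), if_pos hL1]
            first | rfl | abel | simp
        · by_cases hH1 : H.card = 1
          · rw [if_neg (show ¬ (L.card = 1 ∧ H.card = 1) by omega),
              if_neg (show ¬ (L.card = 1 ∧ 2 ≤ H.card) by omega),
              if_pos (show 2 ≤ L.card ∧ H.card = 1 from ⟨by omega, hH1⟩),
              if_pos hH1, if_neg (show ¬ L.card = 1 by omega)]
            first | rfl | abel | simp
          · rw [if_neg (show ¬ (L.card = 1 ∧ H.card = 1) by omega),
              if_neg (show ¬ (L.card = 1 ∧ 2 ≤ H.card) by omega),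
              if_neg (show ¬ (2 ≤ L.card ∧ H.card = 1) by omega),
              if_neg (show ¬ H.card = 1 by omega), if_neg (show ¬ L.card = 1 by omega)]
            first | rfl | abel | simp
end Part4
section Part5
set_option linter.unreachableTactic false
set_option linter.unusedTactic false

lemma cmA_inst_eq {α β : Type} (i1 i2 : DecidableEq β) (ψ : α → β) (s : Finset α) :
    @cmA α β i1 ψ s = @cmA α β i2 ψ s := by
  have : i1 = i2 := by
    funext a b
    exact Subsingleton.elim _ _
  rw [this]

lemma cmA_congr {α β : Type} [DecidableEq β] {ψ ψ' : α → β} {s : Finset α}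
    (h : ∀ i ∈ s, ψ i = ψ' i) : cmA ψ s = cmA ψ' s := by
  unfold cmA
  rw [Finset.image_congr (fun i hi => h i (Finset.mem_coe.mp hi))]

variable {m n : ℕ} {φ : Fin (n+1) → Fin 2}

lemma fin2_cases (x : Fin 2) : x = 0 ∨ x = 1 := by omega

lemma phibar_M : phibar m n φ (elM m n) = 0 := by
  simp [phibar, elM]

lemma phibar_lower (hφ : Monotone φ) {x y : Fin (m+1+n+1)} (hxy : x ≤ y)
    (hy : phibar m n φ y = 0) : phibar m n φ x = 0 := by
  unfold phibar at hy ⊢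
  by_cases hx : (x:ℕ) ≤ m
  · rw [if_pos hx]
  · rw [if_neg hx]
    have hxy' : (x:ℕ) ≤ (y:ℕ) := hxy
    have hym : ¬ (y:ℕ) ≤ m := by omega
    rw [if_neg hym] at hy
    have hmono := hφ (a := ⟨(x:ℕ) - (m+1), by have := x.isLt; omega⟩)
      (b := ⟨(y:ℕ) - (m+1), by have := y.isLt; omega⟩) (by simp [Fin.mk_le_mk]; omega)
    rw [hy] at hmono
    exact Fin.le_zero_iff.mp hmono

/-- `ψ₀`. -/
def psiLo (m n : ℕ) (φ : Fin (n+1) → Fin 2) : Fin (m+1+n+1) → Fin (m+1+n+1) :=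
  fun i => if phibar m n φ i = 0 then min i (elM m n) else i

/-- `ψ₁`. -/
def psiHi (m n : ℕ) (φ : Fin (n+1) → Fin 2) : Fin (m+1+n+1) → Fin (m+1+n+1) :=
  fun i => if phibar m n φ i = 0 then max i (elM m n) else i

/-- `θ`. -/
def psiT (m n : ℕ) (φ : Fin (n+1) → Fin 2) : Fin (m+1+n+1) → Fin (m+1+n+1) :=
  fun i => if phibar m n φ i = 0 then elM m n else i

lemma lt_of_phibar (hφ : Monotone φ) {x y : Fin (m+1+n+1)}
    (hx : phibar m n φ x = 0) (hy : phibar m n φ y = 1) : x < y := by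
  by_contra hc
  push_neg at hc
  rw [phibar_lower hφ hc hx] at hy
  exact absurd hy (by decide)

lemma psiLo_monotone (hφ : Monotone φ) : Monotone (psiLo m n φ) := by
  intro i j hij
  unfold psiLo
  by_cases hi : phibar m n φ i = 0
  · rw [if_pos hi]
    by_cases hj : phibar m n φ j = 0
    · rw [if_pos hj]
      exact min_le_min hij le_rfl
    · rw [if_neg hj]
      exact le_trans (min_le_left _ _) hij
  · by_cases hj : phibar m n φ j = 0
    · exact absurd (phibar_lower hφ hij hj) hi
    · rw [if_neg hi, if_neg hj]
      exact hij
lemma psiHi_monotone (hφ : Monotone φ) : Monotone (psiHi m n φ) := by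
  intro i j hij
  unfold psiHi
  by_cases hi : phibar m n φ i = 0
  · rw [if_pos hi]
    by_cases hj : phibar m n φ j = 0
    · rw [if_pos hj]
      exact max_le_max hij le_rfl
    · rw [if_neg hj]
      have hj1 : phibar m n φ j = 1 := (fin2_cases _).resolve_left hj
      exact max_le hij (le_of_lt (lt_of_phibar hφ phibar_M hj1))
  · by_cases hj : phibar m n φ j = 0
    · exact absurd (phibar_lower hφ hij hj) hi
    · rw [if_neg hi, if_neg hj]
      exact hij
lemma psiT_monotone (hφ : Monotone φ) : Monotone (psiT m n φ) := by
  intro i j hij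
  unfold psiT
  by_cases hi : phibar m n φ i = 0
  · rw [if_pos hi]
    by_cases hj : phibar m n φ j = 0
    · rw [if_pos hj]
    · rw [if_neg hj]
      have hj1 : phibar m n φ j = 1 := (fin2_cases _).resolve_left hj
      exact le_of_lt (lt_of_phibar hφ phibar_M hj1)
  · by_cases hj : phibar m n φ j = 0
    · exact absurd (phibar_lower hφ hij hj) hi
    · rw [if_neg hi, if_neg hj]
      exact hij

/-- splitting lemma : `cmA ψ s = concatR s₁ (cmA ψ s₀)` for any `ψ` preserving `φ̄ = 0`
and fixing `φ̄ = 1`. -/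
lemma cmA_split (hφ : Monotone φ) (ψ : Fin (m+1+n+1) → Fin (m+1+n+1))
    (h1 : ∀ i, phibar m n φ i = 0 → phibar m n φ (ψ i) = 0)
    (h2 : ∀ i, phibar m n φ i = 1 → ψ i = i)
    (s : Finset (Fin (m+1+n+1))) :
    cmA ψ s = concatR (s.filter fun i => phibar m n φ i = 1)
      (cmA ψ (s.filter fun i => phibar m n φ i = 0)) := by
  set s0 := s.filter (fun i => phibar m n φ i = 0) with hs0
  set s1 := s.filter (fun i => phibar m n φ i = 1) with hs1
  have himg : s.image ψ = s0.image ψ ∪ s1 := by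
    ext x
    simp only [Finset.mem_image, Finset.mem_union, Finset.mem_filter, hs0, hs1]
    constructor
    · rintro ⟨i, hi, rfl⟩
      rcases fin2_cases (phibar m n φ i) with h | h
      · exact Or.inl ⟨i, ⟨hi, h⟩, rfl⟩
      · rw [h2 i h]
        exact Or.inr ⟨hi, h⟩
    · rintro (⟨i, ⟨hi, h0⟩, rfl⟩ | ⟨hx, hx1⟩)
      · exact ⟨i, hi, rfl⟩
      · exact ⟨x, hx, h2 x hx1⟩
  have hdisj : Disjoint (s0.image ψ) s1 := by
    rw [Finset.disjoint_left]
    rintro x hx hx1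
    obtain ⟨i, hi, rfl⟩ := Finset.mem_image.mp hx
    rw [hs0] at hi
    rw [hs1] at hx1
    have h0 : phibar m n φ (ψ i) = 0 := h1 i (Finset.mem_filter.mp hi).2
    have h1' : phibar m n φ (ψ i) = 1 := (Finset.mem_filter.mp hx1).2
    rw [h0] at h1'
    exact absurd h1' (by decide)
  have hcardu : (s.image ψ).card = (s0.image ψ).card + s1.card := by
    rw [himg, Finset.card_union_of_disjoint hdisj]
  have hcards : s.card = s0.card + s1.card := by
    have hfil : s.filter (fun i => phibar m n φ i = 1)
        = s.filter (fun i => ¬ phibar m n φ i = 0) := by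
      apply Finset.filter_congr
      intro i _
      constructor
      · intro h
        rw [h]
        decide
      · intro h
        exact (fin2_cases _).resolve_left h
    rw [hs0, hs1, hfil]
    exact (Finset.card_filter_add_card_filter_not (p := fun i => phibar m n φ i = 0)).symm
  have hlt : ∀ x ∈ s0.image ψ, ∀ y ∈ s1, x < y := by
    intro x hx y hy
    obtain ⟨i, hi, rfl⟩ := Finset.mem_image.mp hx
    rw [hs0] at hi
    rw [hs1] at hy
    exact lt_of_phibar hφ (h1 i (Finset.mem_filter.mp hi).2) (Finset.mem_filter.mp hy).2
  by_cases hc : (s0.image ψ).card = s0.card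
  · have hc' : (s.image ψ).card = s.card := by omega
    rw [cmA, if_pos hc', cmA, if_pos hc, concatR_single, if_pos hlt, himg]
  · have hc' : ¬ (s.image ψ).card = s.card := by omega
    rw [cmA, if_neg hc', cmA, if_neg hc, map_zero]

/-- decomposition of `f_φ` as a combination of three chain maps. -/
lemma fPhi_decomp (hφ : Monotone φ) :
    fPhi m n φ = chMap (psiLo m n φ) + chMap (psiHi m n φ) - chMap (psiT m n φ) := by
  apply chLhom_ext
  intro s
  rw [fPhi_single, LinearMap.sub_apply, LinearMap.add_apply, chMap_single, chMap_single,
    chMap_single]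
  set s0 := s.filter (fun i => phibar m n φ i = 0) with hs0
  set s1 := s.filter (fun i => phibar m n φ i = 1) with hs1
  have h0mem : ∀ i ∈ s0, phibar m n φ i = 0 := fun i hi => (Finset.mem_filter.mp hi).2
  have hfp : fPhiAux m n φ s = concatR s1 (fnAux m n s0) := rfl
  rw [hfp, fn_decomp, map_sub, map_add]
  have e1 : cmA (psiLo m n φ) s = concatR s1 (cmA (fun i => min i (elM m n)) s0) := by
    rw [cmA_split hφ (psiLo m n φ) (fun i hi => by
        unfold psiLo
        rw [if_pos hi]
        rcases min_cases i (elM m n) with ⟨he, _⟩ | ⟨he, _⟩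
        · rw [he]; exact hi
        · rw [he]; exact phibar_M)
      (fun i hi => by
        unfold psiLo
        rw [if_neg (by rw [hi]; decide)])
      s]
    rw [← hs0, ← hs1]
    congr 1
    exact cmA_congr (fun i hi => by unfold psiLo; rw [if_pos (h0mem i hi)])
  have e2 : cmA (psiHi m n φ) s = concatR s1 (cmA (fun i => max i (elM m n)) s0) := by
    rw [cmA_split hφ (psiHi m n φ) (fun i hi => by
        unfold psiHi
        rw [if_pos hi]
        rcases max_cases i (elM m n) with ⟨he, _⟩ | ⟨he, _⟩
        · rw [he]; exact hi
        · rw [he]; exact phibar_M)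
      (fun i hi => by
        unfold psiHi
        rw [if_neg (by rw [hi]; decide)])
      s]
    rw [← hs0, ← hs1]
    congr 1
    exact cmA_congr (fun i hi => by unfold psiHi; rw [if_pos (h0mem i hi)])
  have e3 : cmA (psiT m n φ) s = concatR s1 (cmA (fun _ => elM m n) s0) := by
    rw [cmA_split hφ (psiT m n φ) (fun i hi => by
        unfold psiT
        rw [if_pos hi]
        exact phibar_M)
      (fun i hi => by
        unfold psiT
        rw [if_neg (by rw [hi]; decide)])
      s]
    rw [← hs0, ← hs1]
    congr 1
    exact cmA_congr (fun i hi => by unfold psiT; rw [if_pos (h0mem i hi)])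
  rw [e1, e2, e3]

end Part5

/-- STATEMENT 13: for every monotone `φ : [n] → [1]`, `f_φ` commutes with the differentials
and the augmentation, hence is an endomorphism of the augmented chain complex `C(m+1+n)`. -/
theorem fPhi_chain_complex_endomorphism (m n : ℕ) (φ : Fin (n+1) →o Fin 2) :
    (chD (Fin (m+1+n+1))).comp (fPhi m n ⇑φ) = (fPhi m n ⇑φ).comp (chD (Fin (m+1+n+1))) ∧
    (chE (Fin (m+1+n+1))).comp (fPhi m n ⇑φ) = chE (Fin (m+1+n+1)) := by
  have hbridge : ∀ (i1 i2 : DecidableEq (Fin (m+1+n+1))) (ψ : Fin (m+1+n+1) → Fin (m+1+n+1)),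
      @chMap _ _ i1 ψ = @chMap _ _ i2 ψ := by
    intro i1 i2 ψ
    have : i1 = i2 := by
      funext a b
      exact Subsingleton.elim _ _
    rw [this]
  have hdec : fPhi m n ⇑φ = @chMap _ _ (dEqD _) (psiLo m n ⇑φ)
      + @chMap _ _ (dEqD _) (psiHi m n ⇑φ) - @chMap _ _ (dEqD _) (psiT m n ⇑φ) := by
    rw [fPhi_decomp (m := m) (n := n) (φ := ⇑φ) φ.monotone,
      hbridge _ (dEqD _) (psiLo m n ⇑φ), hbridge _ (dEqD _) (psiHi m n ⇑φ),
      hbridge _ (dEqD _) (psiT m n ⇑φ)]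
  constructor
  · rw [hdec, LinearMap.comp_sub, LinearMap.comp_add, LinearMap.sub_comp, LinearMap.add_comp,
      chMap_comp_d (psiLo_monotone φ.monotone), chMap_comp_d (psiHi_monotone φ.monotone),
      chMap_comp_d (psiT_monotone φ.monotone)]
  · rw [hdec, LinearMap.comp_sub, LinearMap.comp_add, chE_comp_chMap, chE_comp_chMap,
      chE_comp_chMap, add_sub_cancel_right]

end
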